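/- Let f : ℝⁿ → ℝ be σ-strongly convex with minimizer θ⋆, and let g : ℝⁿ → ℝ be L-Lipschitz with g(θ⋆) ≤ -ζ for some ζ > 0. If f(θ) - f(θ⋆) ≤ ε where ε ≤ σζ²/(2L²), then g(θ) ≤ 0. -/
import Mathlib


/-- Proposition 1 (single constraint): if `f` is `σ`-strongly convex with global minimizer
`θ⋆`, `g` is `L`-Lipschitz with `g θ⋆ ≤ -ζ`, and `f θ - f θ⋆ ≤ ε ≤ σζ²/(2L²)`,
then `g θ ≤ 0`. -/
theorem screened_constraint_feasible
    {n : ℕ} (f g : EuclideanSpace ℝ (Fin n) → ℝ) (σ L ζ ε : ℝ)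
    (hσ : 0 < σ) (hL : 0 < L) (hζ : 0 < ζ)
    (hsc : ConvexOn ℝ Set.univ (fun θ => f θ - (σ / 2) * ‖θ‖ ^ 2))
    (θstar : EuclideanSpace ℝ (Fin n)) (hmin : ∀ θ, f θstar ≤ f θ)
    (hLip : ∀ x y, |g x - g y| ≤ L * ‖x - y‖)
    (hfeas : g θstar ≤ -ζ)
    (hε : ε ≤ σ * ζ ^ 2 / (2 * L ^ 2))
    (θ : EuclideanSpace ℝ (Fin n)) (hθ : f θ - f θstar ≤ ε) :
    g θ ≤ 0 := by
  have hsc' : StrongConvexOn (Set.univ : Set (EuclideanSpace ℝ (Fin n))) σ f := by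
    rw [strongConvexOn_iff_convex]
    convert hsc using 2
  set K : ℝ := σ / 2 * ‖θ - θstar‖ ^ 2 with hK
  have hK0 : 0 ≤ K := by positivity
  -- key: K ≤ f θ - f θstar
  have key : K ≤ f θ - f θstar := by
    refine le_of_forall_pos_le_add fun δ hδ => ?_
    set t : ℝ := min (1/2) (δ / (K + 1)) with ht
    have ht0 : 0 < t := lt_min (by norm_num) (by positivity)
    have ht1 : t ≤ 1/2 := min_le_left _ _
    have h1t : 0 ≤ 1 - t := by linarith
    have := hsc'.2 (Set.mem_univ θ) (Set.mem_univ θstar) ht0.le h1t (by ring)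
    have hmid : f θstar ≤ f (t • θ + (1 - t) • θstar) := hmin _
    have hineq : f θstar ≤ t * f θ + (1 - t) * f θstar - t * (1 - t) * (σ / 2 * ‖θ - θstar‖ ^ 2) := by
      calc f θstar ≤ f (t • θ + (1 - t) • θstar) := hmid
        _ ≤ t * f θ + (1 - t) * f θstar - t * (1 - t) * (σ / 2 * ‖θ - θstar‖ ^ 2) := this
    -- so (1 - t) * K ≤ f θ - f θstar
    have h2 : (1 - t) * K ≤ f θ - f θstar := by
      have : t * ((1 - t) * K) ≤ t * (f θ - f θstar) := by
        rw [hK]; nlinarith [hineq]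
      exact le_of_mul_le_mul_left this ht0
    have htK : t * K ≤ δ := by
      have h3 : t ≤ δ / (K + 1) := min_le_right _ _
      have : t * K ≤ (δ / (K + 1)) * (K + 1) := by
        have := mul_le_mul h3 (by linarith : K ≤ K + 1) hK0 (by positivity)
        linarith
      rwa [div_mul_cancel₀] at this
      positivity
    nlinarith
  -- hence ‖θ - θstar‖ ≤ ζ / L
  have hnorm : ‖θ - θstar‖ ^ 2 ≤ (ζ / L) ^ 2 := by
    have h1 : K ≤ σ * ζ ^ 2 / (2 * L ^ 2) := le_trans (le_trans key hθ) hε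
    rw [hK] at h1
    have h1' : σ / 2 * ‖θ - θstar‖ ^ 2 * (2 * L ^ 2) ≤ σ * ζ ^ 2 := by
      have h2 := mul_le_mul_of_nonneg_right h1 (by positivity : (0:ℝ) ≤ 2 * L ^ 2)
      rwa [div_mul_cancel₀] at h2
      positivity
    have h3 : σ * (‖θ - θstar‖ ^ 2 * L ^ 2) ≤ σ * ζ ^ 2 := by nlinarith [h1']
    have h4 := le_of_mul_le_mul_left h3 hσ
    rw [div_pow, le_div_iff₀ (by positivity)]
    exact h4
  have hnle : ‖θ - θstar‖ ≤ ζ / L :=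
    (pow_le_pow_iff_left₀ (norm_nonneg _) (by positivity) two_ne_zero).mp hnorm
  have := hLip θ θstar
  have h5 : g θ - g θstar ≤ L * ‖θ - θstar‖ := le_trans (le_abs_self _) this
  have h6 : L * ‖θ - θstar‖ ≤ L * (ζ / L) := by
    exact mul_le_mul_of_nonneg_left hnle hL.le
  rw [mul_div_cancel₀ _ hL.ne'] at h6
  linarith
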